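/- For symmetric positive definite matrices P and P₀, tr(M P₀) = tr((P₀^{1/2} P P₀^{1/2})^{1/2}), where M := P^{1/2}(P^{1/2} P₀ P^{1/2})^{-1/2} P^{1/2}. -/

import Mathlib

open Matrix

open scoped ComplexOrder in
noncomputable def Matrix.PosSemidef.sqrt {n 𝕜 : Type*} [Fintype n] [DecidableEq n] [RCLike 𝕜]
    {A : Matrix n n 𝕜} (hA : A.PosSemidef) : Matrix n n 𝕜 :=
  hA.isHermitian.eigenvectorUnitary.1 * diagonal ((↑) ∘ (√·) ∘ hA.isHermitian.eigenvalues) *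
  (star hA.isHermitian.eigenvectorUnitary : Matrix n n 𝕜)

open scoped MatrixOrder in
lemma aux_sqrt_eq_cfc {n : ℕ} {A : Matrix (Fin n) (Fin n) ℝ} (hA : A.PosSemidef) :
    hA.sqrt = CFC.sqrt A := by
  rw [CFC.sqrt_eq_real_sqrt A hA.nonneg, cfcₙ_eq_cfc (hf0 := Real.sqrt_zero), hA.isHermitian.cfc_eq, IsHermitian.cfc,
    Unitary.conjStarAlgAut_apply]
  rfl

open scoped MatrixOrder in
lemma aux_posSemidef_sqrt {n : ℕ} {A : Matrix (Fin n) (Fin n) ℝ} (hA : A.PosSemidef) :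
    hA.sqrt.PosSemidef := by
  rw [aux_sqrt_eq_cfc]; exact (CFC.sqrt_nonneg A).posSemidef

open scoped MatrixOrder in
lemma aux_sqrt_mul_self {n : ℕ} {A : Matrix (Fin n) (Fin n) ℝ} (hA : A.PosSemidef) :
    hA.sqrt * hA.sqrt = A := by
  rw [aux_sqrt_eq_cfc]; exact CFC.sqrt_mul_sqrt_self A hA.nonneg

open scoped MatrixOrder in
lemma aux_eq_sqrt_of_sq_eq {n : ℕ} {A B : Matrix (Fin n) (Fin n) ℝ} (hB : B.PosSemidef)
    (hA : A.PosSemidef) (h : B ^ 2 = A) : B = hA.sqrt := by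
  rw [aux_sqrt_eq_cfc]; exact (CFC.sqrt_unique (by rw [← sq, h]) hB.nonneg).symm

lemma aux_conj_posDef {n : ℕ} {A B : Matrix (Fin n) (Fin n) ℝ} (hA : A.PosDef)
    (hB : B.det ≠ 0) : (Bᴴ * A * B).PosDef := by
  refine PosDef.of_dotProduct_mulVec_pos (isHermitian_conjTranspose_mul_mul B hA.1) fun x hx => ?_
  have hBx : B *ᵥ x ≠ 0 := fun h => hx (Matrix.eq_zero_of_mulVec_eq_zero hB h)
  simpa only [star_mulVec, dotProduct_mulVec, vecMul_vecMul] using hA.dotProduct_mulVec_pos hBx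
set_option maxHeartbeats 1000000 in
/-- With `M := P^{1/2}(P^{1/2} P₀ P^{1/2})^{-1/2} P^{1/2}`,
`tr(M P₀) = tr((P₀^{1/2} P P₀^{1/2})^{1/2})`. -/
theorem stmt2 {n : ℕ} (P P₀ : Matrix (Fin n) (Fin n) ℝ)
    (hP : P.PosDef) (hP₀ : P₀.PosDef)
    (hmid : (hP.posSemidef.sqrt * P₀ * hP.posSemidef.sqrt).PosSemidef)
    (hmid' : (hP₀.posSemidef.sqrt * P * hP₀.posSemidef.sqrt).PosSemidef) :
    ((hP.posSemidef.sqrt * (hmid.sqrt)⁻¹ * hP.posSemidef.sqrt) * P₀).trace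
      = hmid'.sqrt.trace := by
  set S := hP.posSemidef.sqrt with hSdef
  set T := hP₀.posSemidef.sqrt with hTdef
  have hSps : S.PosSemidef := aux_posSemidef_sqrt hP.posSemidef
  have hTps : T.PosSemidef := aux_posSemidef_sqrt hP₀.posSemidef
  have hS : Sᴴ = S := hSps.1
  have hT : Tᴴ = T := hTps.1
  have hSS : S * S = P := aux_sqrt_mul_self hP.posSemidef
  have hTT : T * T = P₀ := aux_sqrt_mul_self hP₀.posSemidef
  have hdetS : S.det ≠ 0 := by
    intro h
    have h2 := congrArg Matrix.det hSS
    rw [det_mul, h, mul_zero] at h2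
    exact absurd h2.symm (ne_of_gt hP.det_pos)
  have hmidPD : (S * P₀ * S).PosDef := by
    have := aux_conj_posDef hP₀ hdetS
    rwa [hS] at this
  set X := hmid.sqrt with hXdef
  have hXps : X.PosSemidef := aux_posSemidef_sqrt hmid
  have hXX : X * X = S * P₀ * S := aux_sqrt_mul_self hmid
  have hdetX : X.det ≠ 0 := by
    intro h
    have h2 := congrArg Matrix.det hXX
    rw [det_mul, h, mul_zero] at h2
    exact absurd h2.symm (ne_of_gt hmidPD.det_pos)
  have hXu : IsUnit X.det := isUnit_iff_ne_zero.mpr hdetX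
  have hXinvX : X⁻¹ * X = 1 := nonsing_inv_mul X hXu
  have hXXinv : X * X⁻¹ = 1 := mul_nonsing_inv X hXu
  have hXinvps : (X⁻¹).PosSemidef := by
    have h := hXps.conjTranspose_mul_mul_same X⁻¹
    rwa [conjTranspose_nonsing_inv, hXps.1, hXinvX, one_mul] at h
  -- helper cancellation lemmas (right-associated forms)
  have hT2 : ∀ M : Matrix (Fin n) (Fin n) ℝ, T * (T * M) = P₀ * M := fun M => by
    rw [← mul_assoc, hTT]
  have hS2 : ∀ M : Matrix (Fin n) (Fin n) ℝ, S * (S * M) = P * M := fun M => by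
    rw [← mul_assoc, hSS]
  have hXX' : ∀ M : Matrix (Fin n) (Fin n) ℝ, X * (X * M) = S * (P₀ * (S * M)) := fun M => by
    rw [← mul_assoc, hXX, mul_assoc, mul_assoc]
  have hXc : ∀ M : Matrix (Fin n) (Fin n) ℝ, X⁻¹ * (X * M) = M := fun M => by
    rw [← mul_assoc, hXinvX, one_mul]
  have hXc' : ∀ M : Matrix (Fin n) (Fin n) ℝ, X * (X⁻¹ * M) = M := fun M => by
    rw [← mul_assoc, hXXinv, one_mul]
  -- the candidate square root Y
  set Y := T * S * X⁻¹ * (S * T) with hYdef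
  have hYps : Y.PosSemidef := by
    have h := hXinvps.mul_mul_conjTranspose_same (T * S)
    rwa [conjTranspose_mul, hS, hT] at h
  have hYY : Y ^ 2 = T * P * T := by
    rw [pow_two, hYdef]
    have e1 : T * S * X⁻¹ * (S * T) * (T * S * X⁻¹ * (S * T))
        = T * (S * (X⁻¹ * (S * (T * (T * (S * (X⁻¹ * (S * T)))))))) := by
      simp only [mul_assoc]
    rw [e1, hT2, ← hXX', hXc, hXc', hS2, ← mul_assoc]
  have hYeq : Y = hmid'.sqrt := aux_eq_sqrt_of_sq_eq hYps hmid' hYY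
  rw [← hYeq, hYdef]
  rw [← hTT, ← mul_assoc, trace_mul_comm]
  simp only [mul_assoc]
  rfl
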